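/- arXiv:2204.02913 — 2 statements merged into one kernel-verified Lean document; each statement's English description precedes it below -/
import Mathlib

section
/- Let S ⊆ ℤ \ {0} be finite with |S| = d. The integer distance digraph Γ(ℤ, S) has an efficient dominating set if and only if its domination ratio equals 1/(d+1). -/
open Filter

/-- Lower density of a set of integers. -/
noncomputable def lowerDensity (D : Set ℤ) : ℝ :=
  Filter.liminf (fun n : ℕ =>
    ((D ∩ Set.Icc (-(n : ℤ)) (n : ℤ)).ncard : ℝ) / (2 * (n : ℝ) + 1)) Filter.atTop

/-- `D` is a dominating set of the integer distance digraph `Γ(ℤ,S)`. -/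
def Dominating (S D : Set ℤ) : Prop :=
  ∀ m : ℤ, m ∈ D ∨ ∃ u ∈ D, ∃ s ∈ S, m = u + s

/-- Domination ratio of `Γ(ℤ,S)`. -/
noncomputable def dominationRatio (S : Set ℤ) : ℝ :=
  sInf (lowerDensity '' {D : Set ℤ | Dominating S D})

/-- `D` is an efficient dominating set of `Γ(ℤ,S)`: every integer is dominated
by exactly one element of `D`. -/
def EffDominating (S D : Set ℤ) : Prop :=
  ∀ m : ℤ, ∃! u, u ∈ D ∧ (u = m ∨ m - u ∈ S)

section aux7

open scoped Classical

variable {S : Set ℤ}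

/-- The finite window of `D` in `[-n, n]`. -/
noncomputable def aux7E (D : Set ℤ) (n : ℕ) : Finset ℤ :=
  ((Set.finite_Icc (-(n : ℤ)) (n : ℤ)).inter_of_right D).toFinset

lemma aux7E_mem {D : Set ℤ} {n : ℕ} {u : ℤ} :
    u ∈ aux7E D n ↔ u ∈ D ∧ -(n : ℤ) ≤ u ∧ u ≤ n := by
  simp [aux7E, Set.mem_Icc, and_assoc]

lemma aux7E_card (D : Set ℤ) (n : ℕ) :
    (D ∩ Set.Icc (-(n : ℤ)) (n : ℤ)).ncard = (aux7E D n).card :=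
  Set.ncard_eq_toFinset_card _ _

lemma aux7_filter_sub (T : Finset ℤ) (hTS : ∀ x, x ∈ T ↔ x ∈ S) (u : ℤ) (W : Finset ℤ) :
    (W.filter (fun m => u = m ∨ m - u ∈ S)).card ≤ T.card + 1 := by
  have h : W.filter (fun m => u = m ∨ m - u ∈ S) ⊆ insert u (T.image (fun s => u + s)) := by
    intro m hm
    rcases Finset.mem_filter.mp hm with ⟨-, h | h⟩
    · simp [h.symm]
    · exact Finset.mem_insert_of_mem (Finset.mem_image.mpr ⟨m - u, (hTS _).mpr h, by ring⟩)
  refine (Finset.card_le_card h).trans ((Finset.card_insert_le _ _).trans ?_)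
  have := Finset.card_image_le (s := T) (f := fun s => u + s)
  omega

lemma aux7_one_le (T : Finset ℤ) (hTS : ∀ x, x ∈ T ↔ x ∈ S) (M : ℕ)
    (hM : ∀ s ∈ T, s.natAbs ≤ M) {D : Set ℤ} (hD : Dominating S D) {n : ℕ} {m : ℤ}
    (hm1 : -(n : ℤ) + M ≤ m) (hm2 : m ≤ (n : ℤ) - M) :
    1 ≤ ((aux7E D n).filter (fun u => u = m ∨ m - u ∈ S)).card := by
  rcases hD m with h | ⟨u, hu, s, hs, rfl⟩
  · exact Finset.card_pos.mpr ⟨m, Finset.mem_filter.mpr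
      ⟨aux7E_mem.mpr ⟨h, by omega⟩, Or.inl rfl⟩⟩
  · have hloc := hM s ((hTS s).mpr hs)
    refine Finset.card_pos.mpr ⟨u, Finset.mem_filter.mpr
      ⟨aux7E_mem.mpr ⟨hu, by omega⟩, Or.inr ?_⟩⟩
    simpa using hs

lemma aux7_count (T : Finset ℤ) (hTS : ∀ x, x ∈ T ↔ x ∈ S) (M : ℕ)
    (hM : ∀ s ∈ T, s.natAbs ≤ M) {D : Set ℤ} (hD : Dominating S D) (n : ℕ) :
    (Finset.Icc (-(n : ℤ) + M) ((n : ℤ) - M)).card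
      + ((Finset.Icc (-(n : ℤ) + M) ((n : ℤ) - M)).filter
          (fun m => 2 ≤ ((aux7E D n).filter (fun u => u = m ∨ m - u ∈ S)).card)).card
      ≤ (T.card + 1) * (aux7E D n).card := by
  set E := aux7E D n with hE
  set W := Finset.Icc (-(n : ℤ) + M) ((n : ℤ) - M) with hW
  set t : ℤ → ℕ := fun m => (E.filter (fun u => u = m ∨ m - u ∈ S)).card with ht
  set B := W.filter (fun m => 2 ≤ t m) with hB
  have hBW : B ⊆ W := Finset.filter_subset _ _
  have key1 : W.card + B.card ≤ ∑ m ∈ W, t m := by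
    have hsplit : ∑ m ∈ W \ B, t m + ∑ m ∈ B, t m = ∑ m ∈ W, t m :=
      Finset.sum_sdiff hBW
    have h1 : (W \ B).card * 1 ≤ ∑ m ∈ W \ B, t m := by
      rw [Finset.card_eq_sum_ones (W \ B), Finset.sum_mul]
      refine Finset.sum_le_sum fun m hm => ?_
      have hmW := Finset.mem_sdiff.mp hm
      have := aux7_one_le T hTS M hM hD (n := n) (m := m)
        (Finset.mem_Icc.mp hmW.1).1 (Finset.mem_Icc.mp hmW.1).2
      simpa [ht] using Finset.card_pos.mpr (Finset.card_pos.mp this)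
    have h2 : B.card * 2 ≤ ∑ m ∈ B, t m := by
      rw [Finset.card_eq_sum_ones B, Finset.sum_mul]
      refine Finset.sum_le_sum fun m hm => ?_
      have := (Finset.mem_filter.mp hm).2
      simpa using this
    have h3 : (W \ B).card + B.card = W.card := Finset.card_sdiff_add_card_eq_card hBW
    omega
  have key2 : ∑ m ∈ W, t m = ∑ u ∈ E, (W.filter (fun m => u = m ∨ m - u ∈ S)).card := by
    simp only [ht, Finset.card_filter]
    exact Finset.sum_comm
  have key3 : ∑ u ∈ E, (W.filter (fun m => u = m ∨ m - u ∈ S)).card ≤ E.card * (T.card + 1) := by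
    rw [Finset.card_eq_sum_ones E, Finset.sum_mul]
    refine Finset.sum_le_sum fun u _ => ?_
    simpa using aux7_filter_sub T hTS u W
  have := key1.trans (key2 ▸ key3)
  calc W.card + B.card ≤ E.card * (T.card + 1) := this
    _ = (T.card + 1) * E.card := Nat.mul_comm _ _

lemma aux7_eff_dom {D : Set ℤ} (hD : EffDominating S D) : Dominating S D := by
  intro m
  obtain ⟨u, ⟨hu, h'⟩, -⟩ := hD m
  rcases h' with rfl | hs
  · exact Or.inl hu
  · exact Or.inr ⟨u, hu, m - u, hs, by ring⟩

lemma aux7_eff_upper (T : Finset ℤ) (hTS : ∀ x, x ∈ T ↔ x ∈ S) (h0 : 0 ∉ S) (M : ℕ)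
    (hM : ∀ s ∈ T, s.natAbs ≤ M) {D : Set ℤ} (hD : EffDominating S D) (n : ℕ) :
    (T.card + 1) * (aux7E D n).card ≤ 2 * n + 2 * M + 1 := by
  set E := aux7E D n with hE
  set F : ℤ → Finset ℤ := fun u => insert u (T.image (fun s => u + s)) with hF
  have hmemF : ∀ u m : ℤ, m ∈ F u ↔ (u = m ∨ m - u ∈ S) := by
    intro u m
    simp only [hF, Finset.mem_insert, Finset.mem_image]
    constructor
    · rintro (rfl | ⟨s, hs, rfl⟩)
      · exact Or.inl rfl
      · exact Or.inr (by simpa using (hTS s).mp hs)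
    · rintro (rfl | h)
      · exact Or.inl rfl
      · exact Or.inr ⟨m - u, (hTS _).mpr h, by ring⟩
  have hcardF : ∀ u : ℤ, (F u).card = T.card + 1 := by
    intro u
    rw [hF]
    simp only
    rw [Finset.card_insert_of_notMem, Finset.card_image_of_injective _ (add_right_injective u)]
    intro hu
    rcases Finset.mem_image.mp hu with ⟨s, hs, hsu⟩
    have hs0 : s = 0 := by omega
    exact h0 ((hTS 0).mp (hs0 ▸ hs))
  have hdisj : ∀ u ∈ E, ∀ v ∈ E, u ≠ v → Disjoint (F u) (F v) := by
    intro u hu v hv huv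
    refine Finset.disjoint_left.mpr fun m hmu hmv => huv ?_
    obtain ⟨w, -, hw⟩ := hD m
    exact (hw u ⟨(aux7E_mem.mp hu).1, (hmemF u m).mp hmu⟩).trans
      (hw v ⟨(aux7E_mem.mp hv).1, (hmemF v m).mp hmv⟩).symm
  have hbi : (E.biUnion F).card = ∑ u ∈ E, (F u).card := Finset.card_biUnion hdisj
  have hsum : ∑ u ∈ E, (F u).card = E.card * (T.card + 1) := by
    rw [Finset.sum_congr rfl fun u _ => hcardF u, Finset.sum_const, smul_eq_mul]
  have hsub : E.biUnion F ⊆ Finset.Icc (-(n : ℤ) - M) ((n : ℤ) + M) := by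
    intro m hm
    rcases Finset.mem_biUnion.mp hm with ⟨u, hu, hmu⟩
    obtain ⟨-, hu1, hu2⟩ := aux7E_mem.mp hu
    rw [Finset.mem_Icc]
    rcases (hmemF u m).mp hmu with rfl | h
    · omega
    · have := hM (m - u) ((hTS _).mpr h)
      omega
  have hIcc : (Finset.Icc (-(n : ℤ) - M) ((n : ℤ) + M)).card = 2 * n + 2 * M + 1 := by
    rw [Int.card_Icc]; omega
  have h := (Finset.card_le_card hsub)
  rw [hbi, hsum, hIcc, Nat.mul_comm] at h
  exact h

lemma aux7_W_card (M n : ℕ) (hn : M ≤ n) :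
    (Finset.Icc (-(n : ℤ) + M) ((n : ℤ) - M)).card = 2 * n + 1 - 2 * M := by
  rw [Int.card_Icc]; omega

lemma aux7_f_le_one (D : Set ℤ) (n : ℕ) :
    ((D ∩ Set.Icc (-(n : ℤ)) (n : ℤ)).ncard : ℝ) / (2 * (n : ℝ) + 1) ≤ 1 := by
  have h1 : (D ∩ Set.Icc (-(n : ℤ)) (n : ℤ)).ncard ≤ (Set.Icc (-(n : ℤ)) (n : ℤ)).ncard :=
    Set.ncard_le_ncard Set.inter_subset_right (Set.finite_Icc _ _)
  have h2 : (Set.Icc (-(n : ℤ)) (n : ℤ)).ncard = 2 * n + 1 := by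
    rw [← Finset.coe_Icc, Set.ncard_coe_finset, Int.card_Icc]; omega
  rw [div_le_one (by positivity)]
  rw [h2] at h1
  have h3 := (Nat.cast_le (α := ℝ)).mpr h1
  push_cast at h3
  linarith

lemma aux7_tendsto (c a : ℝ) (hc : 0 < c) :
    Tendsto (fun n : ℕ => (2 * (n : ℝ) + 1 + a) / (c * (2 * (n : ℝ) + 1))) atTop
      (nhds (1 / c)) := by
  have h2 : Tendsto (fun n : ℕ => 2 * (n : ℝ) + 1) atTop atTop :=
    tendsto_atTop_add_const_right _ 1
      (tendsto_natCast_atTop_atTop.const_mul_atTop two_pos)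
  have h3 : Tendsto (fun n : ℕ => (2 * (n : ℝ) + 1)⁻¹) atTop (nhds 0) :=
    h2.inv_tendsto_atTop
  have heq : ∀ n : ℕ, (2 * (n : ℝ) + 1 + a) / (c * (2 * (n : ℝ) + 1))
      = 1 / c + (a / c) * (2 * (n : ℝ) + 1)⁻¹ := by
    intro n
    have hn0 : (2 * (n : ℝ) + 1) ≠ 0 := by positivity
    field_simp
  have h4 : Tendsto (fun n : ℕ => 1 / c + (a / c) * (2 * (n : ℝ) + 1)⁻¹) atTop
      (nhds (1 / c + (a / c) * 0)) := tendsto_const_nhds.add (tendsto_const_nhds.mul h3)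
  rw [mul_zero, add_zero] at h4
  exact h4.congr fun n => (heq n).symm

lemma aux7_lb_real (T : Finset ℤ) (hTS : ∀ x, x ∈ T ↔ x ∈ S) (M : ℕ)
    (hM : ∀ s ∈ T, s.natAbs ≤ M) {D : Set ℤ} (hD : Dominating S D) {n : ℕ} (hn : M ≤ n) :
    (2 * (n : ℝ) + 1 + -(2 * M)) / (((T.card : ℝ) + 1) * (2 * (n : ℝ) + 1))
      ≤ ((D ∩ Set.Icc (-(n : ℤ)) (n : ℤ)).ncard : ℝ) / (2 * (n : ℝ) + 1) := by
  have hcount := aux7_count T hTS M hM hD n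
  have hW := aux7_W_card M n hn
  rw [hW] at hcount
  have hkey : (2 * n + 1 - 2 * M : ℕ) ≤ (T.card + 1) * (aux7E D n).card := by omega
  have hkeyR : (2 * (n : ℝ) + 1 - 2 * M) ≤ ((T.card : ℝ) + 1) * ((aux7E D n).card : ℝ) := by
    have := (Nat.cast_le (α := ℝ)).mpr hkey
    push_cast [Nat.cast_sub (show 2 * M ≤ 2 * n + 1 by omega)] at this
    linarith
  rw [aux7E_card, div_le_div_iff₀ (by positivity) (by positivity)]
  have hpos : (0 : ℝ) ≤ 2 * (n : ℝ) + 1 := by positivity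
  nlinarith [hkeyR]

lemma aux7_ld_ge (T : Finset ℤ) (hTS : ∀ x, x ∈ T ↔ x ∈ S) (M : ℕ)
    (hM : ∀ s ∈ T, s.natAbs ≤ M) {D : Set ℤ} (hD : Dominating S D) :
    1 / ((T.card : ℝ) + 1) ≤ lowerDensity D := by
  set g : ℕ → ℝ := fun n => (2 * (n : ℝ) + 1 + -(2 * M)) / (((T.card : ℝ) + 1) * (2 * (n : ℝ) + 1))
    with hg
  have hgt : Tendsto g atTop (nhds (1 / ((T.card : ℝ) + 1))) :=
    aux7_tendsto _ _ (by positivity)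
  have hle : ∀ᶠ n in atTop, g n
      ≤ ((D ∩ Set.Icc (-(n : ℤ)) (n : ℤ)).ncard : ℝ) / (2 * (n : ℝ) + 1) := by
    filter_upwards [eventually_ge_atTop M] with n hn
    exact aux7_lb_real T hTS M hM hD hn
  have h := liminf_le_liminf hle hgt.isBoundedUnder_ge
    (isCoboundedUnder_ge_of_eventually_le atTop
      (Eventually.of_forall fun n => aux7_f_le_one D n))
  rw [hgt.liminf_eq] at h
  exact h

lemma aux7_eff_density (T : Finset ℤ) (hTS : ∀ x, x ∈ T ↔ x ∈ S) (h0 : 0 ∉ S) (M : ℕ)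
    (hM : ∀ s ∈ T, s.natAbs ≤ M) {D : Set ℤ} (hD : EffDominating S D) :
    lowerDensity D = 1 / ((T.card : ℝ) + 1) := by
  have htend : Tendsto (fun n : ℕ =>
      ((D ∩ Set.Icc (-(n : ℤ)) (n : ℤ)).ncard : ℝ) / (2 * (n : ℝ) + 1)) atTop
      (nhds (1 / ((T.card : ℝ) + 1))) := by
    refine tendsto_of_tendsto_of_tendsto_of_le_of_le'
      (aux7_tendsto ((T.card : ℝ) + 1) (-(2 * M)) (by positivity))
      (aux7_tendsto ((T.card : ℝ) + 1) (2 * M) (by positivity)) ?_ ?_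
    · filter_upwards [eventually_ge_atTop M] with n hn
      exact aux7_lb_real T hTS M hM (aux7_eff_dom hD) hn
    · filter_upwards with n
      have hcount := aux7_eff_upper T hTS h0 M hM hD n
      have hkeyR : ((T.card : ℝ) + 1) * ((aux7E D n).card : ℝ) ≤ 2 * (n : ℝ) + 1 + 2 * M := by
        have := (Nat.cast_le (α := ℝ)).mpr hcount
        push_cast at this
        linarith
      rw [aux7E_card, div_le_div_iff₀ (by positivity) (by positivity)]
      nlinarith [hkeyR]
  exact htend.liminf_eq

set_option maxHeartbeats 1000000 in
lemma aux7_window (T : Finset ℤ) (hTS : ∀ x, x ∈ T ↔ x ∈ S) (M : ℕ)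
    (hM : ∀ s ∈ T, s.natAbs ≤ M) (d : ℕ) (hd : T.card = d)
    (hrat : dominationRatio S = 1 / ((d : ℝ) + 1)) (k : ℕ) :
    ∃ X : Set ℤ, ∀ m : ℤ, m.natAbs ≤ k → ∃! u, u ∈ X ∧ (u = m ∨ m - u ∈ S) := by
  set L : ℕ := 2 * k + 1 with hLdef
  set q : ℕ := 2 * L * (d + 1) with hqdef
  have hL1 : 1 ≤ L := by omega
  have hq0 : 0 < q := by positivity
  -- Step 1: a dominating set with near-optimal lower density
  obtain ⟨D, hD, hld⟩ : ∃ D, Dominating S D ∧ lowerDensity D < 1 / ((d : ℝ) + 1) + 1 / (q : ℝ) := by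
    by_contra hcon
    push_neg at hcon
    have h1 : 1 / ((d : ℝ) + 1) + 1 / (q : ℝ) ≤ dominationRatio S := by
      refine le_csInf ⟨lowerDensity Set.univ, Set.univ, fun m => Or.inl trivial, rfl⟩ ?_
      rintro b ⟨D, hD, rfl⟩
      exact hcon D hD
    have hq : (0 : ℝ) < 1 / (q : ℝ) := by positivity
    rw [hrat] at h1
    linarith
  -- Step 2: a large window with small count
  have hld' : liminf (fun n : ℕ =>
      ((D ∩ Set.Icc (-(n : ℤ)) (n : ℤ)).ncard : ℝ) / (2 * (n : ℝ) + 1)) atTop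
      < 1 / ((d : ℝ) + 1) + 1 / (q : ℝ) := hld
  have hfreq : ∃ᶠ n : ℕ in atTop,
      ((D ∩ Set.Icc (-(n : ℤ)) (n : ℤ)).ncard : ℝ) / (2 * (n : ℝ) + 1)
      < 1 / ((d : ℝ) + 1) + 1 / (q : ℝ) := by
    refine frequently_lt_of_liminf_lt ?_ hld'
    exact isCoboundedUnder_ge_of_eventually_le atTop
      (Eventually.of_forall fun n => aux7_f_le_one D n)
  obtain ⟨n, hnN, hfn⟩ := frequently_atTop.mp hfreq (2 * L * M + 2 * M + L + M + 1)
  have hnM : M ≤ n := by omega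
  set E := aux7E D n with hE
  set c := E.card with hc
  -- Step 3: convert the density bound to a natural-number inequality
  have hcN : c * ((d + 1) * q) < (2 * n + 1) * (q + (d + 1)) := by
    rw [aux7E_card, ← hE, ← hc] at hfn
    have hfn' : (c : ℝ) < (1 / ((d : ℝ) + 1) + 1 / (q : ℝ)) * (2 * (n : ℝ) + 1) := by
      rw [div_lt_iff₀ (by positivity)] at hfn
      exact hfn
    have hA : (0 : ℝ) < (d : ℝ) + 1 := by positivity
    have hQ : (0 : ℝ) < (q : ℝ) := by exact_mod_cast hq0
    have h1 : (c : ℝ) * (((d : ℝ) + 1) * q) <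
        (1 / ((d : ℝ) + 1) + 1 / (q : ℝ)) * (2 * (n : ℝ) + 1) * (((d : ℝ) + 1) * q) := by
      exact mul_lt_mul_of_pos_right hfn' (by positivity)
    have h2 : (1 / ((d : ℝ) + 1) + 1 / (q : ℝ)) * (2 * (n : ℝ) + 1) * (((d : ℝ) + 1) * q)
        = (2 * (n : ℝ) + 1) * ((q : ℝ) + ((d : ℝ) + 1)) := by
      field_simp
    rw [h2] at h1
    exact_mod_cast h1
  -- Step 4: counting gives few badly dominated points
  set W := Finset.Icc (-(n : ℤ) + M) ((n : ℤ) - M) with hW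
  set B := W.filter (fun m => 2 ≤ (E.filter (fun u => u = m ∨ m - u ∈ S)).card) with hB
  have hcount := aux7_count T hTS M hM hD n
  rw [← hE, ← hW, ← hB, aux7_W_card M n hnM, hd, ← hc] at hcount
  set w : ℕ := 2 * n + 1 - 2 * M with hwdef
  have hw : w + 2 * M = 2 * n + 1 := by omega
  -- Step 5: bound on B.card
  set N : ℕ := w / L with hN
  have hdm : L * (w / L) + w % L = w := Nat.div_add_mod w L
  have hr : w % L < L := Nat.mod_lt _ (by omega)
  have hBN : B.card < N := by
    by_contra hcon
    push_neg at hcon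
    have h10 : L * N ≤ L * B.card := Nat.mul_le_mul_left L hcon
    have h5 : q * (w + B.card) ≤ q * ((d + 1) * c) := Nat.mul_le_mul_left q hcount
    have h6 : q * ((d + 1) * c) = c * ((d + 1) * q) := by ring
    have h7 : q * (w + B.card) < (2 * n + 1) * (q + (d + 1)) := lt_of_le_of_lt (h6 ▸ h5) hcN
    -- cast to ℤ and finish linearly (treating products as atoms)
    have h7Z : (q : ℤ) * (w + B.card) < (2 * n + 1) * ((q : ℤ) + (d + 1)) := by exact_mod_cast h7
    have hwZ : (w : ℤ) + 2 * M = 2 * n + 1 := by exact_mod_cast hw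
    have hdmZ : (L : ℤ) * N + (w % L : ℕ) = w := by exact_mod_cast hdm
    have hrZ : ((w % L : ℕ) : ℤ) < L := by exact_mod_cast hr
    have h10Z : (L : ℤ) * N ≤ (L : ℤ) * B.card := by exact_mod_cast h10
    have hnZ : (2 : ℤ) * L * M + 2 * M + L + M + 1 ≤ n := by exact_mod_cast hnN
    have hqZ : (q : ℤ) = 2 * L * (d + 1) := by exact_mod_cast hqdef
    -- expand q and cancel (d+1)
    have hexp : (2 : ℤ) * ((L : ℤ) * (w + B.card)) < (2 * n + 1) * (2 * L) + (2 * n + 1) := by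
      have hd1 : (0 : ℤ) < (d : ℤ) + 1 := by positivity
      have e1 : (q : ℤ) * (w + B.card) = ((d : ℤ) + 1) * (2 * ((L : ℤ) * (w + B.card))) := by
        rw [hqZ]; ring
      have e2 : ((2 * n + 1) : ℤ) * ((q : ℤ) + (d + 1))
          = ((d : ℤ) + 1) * ((2 * n + 1) * (2 * L) + (2 * n + 1)) := by
        rw [hqZ]; ring
      rw [e1, e2] at h7Z
      exact lt_of_mul_lt_mul_left h7Z (by positivity)
    have e3 : (2 : ℤ) * ((L : ℤ) * ((w : ℤ) + B.card)) = 2 * ((L : ℤ) * w) + 2 * ((L : ℤ) * B.card) := by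
      ring
    have hLw : ((2 * (n : ℤ) + 1)) * (2 * (L : ℤ)) = 2 * ((L : ℤ) * w) + 4 * ((L : ℤ) * M) := by
      linear_combination (-2 * (L : ℤ)) * hwZ
    have hM0 : (0 : ℤ) ≤ (M : ℤ) := Int.ofNat_nonneg M
    linarith [hexp, e3, hLw, hdmZ, hrZ, h10Z, hnZ, hwZ, hM0]
  -- Step 6: pigeonhole — some block of length L avoids B
  set a : ℤ := -(n : ℤ) + M with ha
  have hfree : ∃ j : ℕ, j < N ∧ ∀ m' ∈ B, ¬(a + j * L ≤ m' ∧ m' ≤ a + j * L + 2 * k) := by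
    by_contra hcon
    push_neg at hcon
    have hch : ∀ j : Fin N, ∃ m', m' ∈ B ∧ a + j * L ≤ m' ∧ m' ≤ a + j * L + 2 * k := by
      intro j
      obtain ⟨m', hm'B, hm'⟩ := hcon j j.2
      exact ⟨m', hm'B, hm'⟩
    choose φ hφB hφl hφu using hch
    have hinj : Function.Injective φ := by
      intro i j hij
      by_contra hne
      have hL2k : (L : ℤ) = 2 * k + 1 := by exact_mod_cast hLdef
      rcases lt_or_gt_of_ne (fun h : (i : ℕ) = (j : ℕ) => hne (Fin.ext h)) with h | h
      · have h1 : ((i : ℕ) + 1) * L ≤ (j : ℕ) * L := Nat.mul_le_mul_right L h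
        have h1Z : (((i : ℕ) : ℤ) + 1) * L ≤ ((j : ℕ) : ℤ) * L := by exact_mod_cast h1
        linarith [hφu i, hφl j, h1Z, hL2k, hij]
      · have h1 : ((j : ℕ) + 1) * L ≤ (i : ℕ) * L := Nat.mul_le_mul_right L h
        have h1Z : (((j : ℕ) : ℤ) + 1) * L ≤ ((i : ℕ) : ℤ) * L := by exact_mod_cast h1
        linarith [hφu j, hφl i, h1Z, hL2k, hij]
    have hsub : Finset.image φ Finset.univ ⊆ B := by
      intro x hx
      obtain ⟨j, -, rfl⟩ := Finset.mem_image.mp hx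
      exact hφB j
    have hcard := Finset.card_le_card hsub
    rw [Finset.card_image_of_injective _ hinj, Finset.card_univ, Fintype.card_fin] at hcard
    omega
  obtain ⟨j, hjN, hjfree⟩ := hfree
  -- Step 7: translate the good block to the origin
  set t : ℤ := a + j * L + k with htdef
  refine ⟨{v : ℤ | v + t ∈ D}, fun m hm => ?_⟩
  set m' : ℤ := m + t with hm'def
  have hjL : ((j : ℤ) + 1) * L ≤ (N : ℤ) * L := by
    have : (j + 1) * L ≤ N * L := Nat.mul_le_mul_right L hjN
    exact_mod_cast this
  have hNw : (N : ℤ) * L ≤ (w : ℤ) := by exact_mod_cast Nat.div_mul_le_self w L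
  have hwZ : (w : ℤ) + 2 * M = 2 * n + 1 := by exact_mod_cast hw
  have hL2k : (L : ℤ) = 2 * k + 1 := by exact_mod_cast hLdef
  have hm'block : a + j * L ≤ m' ∧ m' ≤ a + j * L + 2 * k := by
    constructor <;> [skip; skip] <;> · simp only [hm'def, htdef]; omega
  have hm'W1 : -(n : ℤ) + M ≤ m' := by
    have : (0 : ℤ) ≤ (j : ℤ) * L := by positivity
    omega
  have hm'W2 : m' ≤ (n : ℤ) - M := by
    have h1 : m' ≤ a + j * L + 2 * k := hm'block.2
    have h2 : (j : ℤ) * L + 2 * k + 1 ≤ (N : ℤ) * L := by nlinarith [hjL]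
    omega
  -- exactly one dominator of m' in E
  have hge1 : 1 ≤ (E.filter (fun u => u = m' ∨ m' - u ∈ S)).card :=
    aux7_one_le T hTS M hM hD hm'W1 hm'W2
  have hle1 : (E.filter (fun u => u = m' ∨ m' - u ∈ S)).card ≤ 1 := by
    by_contra hcon
    push_neg at hcon
    have hm'B : m' ∈ B := by
      rw [hB]
      exact Finset.mem_filter.mpr ⟨Finset.mem_Icc.mpr ⟨hm'W1, hm'W2⟩, by omega⟩
    exact hjfree m' hm'B hm'block
  obtain ⟨u₀, hu₀⟩ := Finset.card_eq_one.mp (le_antisymm hle1 hge1)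
  have hu₀mem : u₀ ∈ E.filter (fun u => u = m' ∨ m' - u ∈ S) := by
    rw [hu₀]; exact Finset.mem_singleton_self u₀
  obtain ⟨hu₀E, hu₀d⟩ := Finset.mem_filter.mp hu₀mem
  have hu₀D : u₀ ∈ D := (aux7E_mem.mp hu₀E).1
  refine ⟨u₀ - t, ⟨?_, ?_⟩, ?_⟩
  · show u₀ - t + t ∈ D
    simpa using hu₀D
  · rcases hu₀d with h | h
    · left; omega
    · right
      have : m - (u₀ - t) = m' - u₀ := by rw [hm'def]; ring
      rw [this]; exact h
  · rintro v ⟨hvX, hvd⟩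
    have hvD : v + t ∈ D := hvX
    have hvdom : v + t = m' ∨ m' - (v + t) ∈ S := by
      rcases hvd with rfl | h
      · left; rw [hm'def]
      · right
        have : m' - (v + t) = m - v := by rw [hm'def]; ring
        rw [this]; exact h
    have hvE : v + t ∈ E := by
      rcases hvdom with h | h
      · exact aux7E_mem.mpr ⟨hvD, by omega⟩
      · have := hM (m' - (v + t)) ((hTS _).mpr h)
        exact aux7E_mem.mpr ⟨hvD, by omega⟩
    have hvF : v + t ∈ E.filter (fun u => u = m' ∨ m' - u ∈ S) := by
      refine Finset.mem_filter.mpr ⟨hvE, ?_⟩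
      rcases hvdom with h | h
      · exact Or.inl h
      · exact Or.inr h
    rw [hu₀] at hvF
    have : v + t = u₀ := Finset.mem_singleton.mp hvF
    omega

lemma aux7_glue (T : Finset ℤ) (hTS : ∀ x, x ∈ T ↔ x ∈ S) (X : ℕ → Set ℤ)
    (hX : ∀ k, ∀ m : ℤ, m.natAbs ≤ k → ∃! u, u ∈ X k ∧ (u = m ∨ m - u ∈ S)) :
    ∃ D : Set ℤ, EffDominating S D := by
  obtain ⟨U, hU⟩ := Ultrafilter.exists_le (atTop : Filter ℕ)
  refine ⟨{v : ℤ | {k : ℕ | v ∈ X k} ∈ U}, fun m => ?_⟩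
  set D : Set ℤ := {v : ℤ | {k : ℕ | v ∈ X k} ∈ U} with hD
  set F : Finset ℤ := insert m (T.image (fun s => m - s)) with hFdef
  have hF : ∀ u : ℤ, (u = m ∨ m - u ∈ S) → u ∈ F := by
    intro u hu
    rcases hu with rfl | h
    · exact Finset.mem_insert_self _ _
    · exact Finset.mem_insert_of_mem (Finset.mem_image.mpr ⟨m - u, (hTS _).mpr h, by ring⟩)
  set g : ℕ → Finset ℤ := fun k => @Finset.filter ℤ (fun u => u ∈ X k) (Classical.decPred _) F with hg
  have hcover : (Set.univ : Set ℕ) = ⋃ A ∈ (↑F.powerset : Set (Finset ℤ)), {k | g k = A} := by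
    ext k
    simp only [Set.mem_univ, true_iff, Set.mem_iUnion, Set.mem_setOf_eq]
    refine ⟨g k, ?_, rfl⟩
    simp only [Finset.coe_powerset, Set.mem_preimage, Set.mem_powerset_iff, hg]
    intro u hu
    exact Finset.coe_subset.mpr (Finset.filter_subset _ _) hu
  have huniv : (⋃ A ∈ (↑F.powerset : Set (Finset ℤ)), {k | g k = A}) ∈ U := by
    rw [← hcover]; exact Filter.univ_mem
  obtain ⟨A, -, hA⟩ := (Ultrafilter.finite_biUnion_mem_iff (F.powerset.finite_toSet)).mp huniv
  -- membership transfer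
  have hmem : ∀ u ∈ F, (u ∈ D ↔ u ∈ A) := by
    intro u huF
    constructor
    · intro huD
      have hint : {k : ℕ | u ∈ X k} ∩ {k | g k = A} ∈ U := Filter.inter_mem huD hA
      obtain ⟨k, hk1, hk2⟩ := Filter.nonempty_of_mem hint
      rw [← hk2, hg]
      exact Finset.mem_filter.mpr ⟨huF, hk1⟩
    · intro huA
      refine Filter.mem_of_superset hA fun k hk => ?_
      have : u ∈ g k := hk ▸ huA
      exact (Finset.mem_filter.mp this).2
  -- pick a large k in the A-class
  have hbig : {k | g k = A} ∩ {k | m.natAbs ≤ k} ∈ U :=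
    Filter.inter_mem hA (hU (eventually_ge_atTop m.natAbs))
  obtain ⟨k, hk1, hk2⟩ := Filter.nonempty_of_mem hbig
  obtain ⟨u₀, ⟨hu₀X, hu₀d⟩, hu₀u⟩ := hX k m hk2
  have hu₀F : u₀ ∈ F := hF u₀ hu₀d
  have hu₀A : u₀ ∈ A := hk1 ▸ (Finset.mem_filter.mpr ⟨hu₀F, hu₀X⟩)
  refine ⟨u₀, ⟨(hmem u₀ hu₀F).mpr hu₀A, hu₀d⟩, ?_⟩
  rintro v ⟨hvD, hvd⟩
  have hvF : v ∈ F := hF v hvd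
  have hvA : v ∈ A := (hmem v hvF).mp hvD
  have hvX : v ∈ X k := by
    have : v ∈ g k := hk1 ▸ hvA
    exact (Finset.mem_filter.mp this).2
  exact hu₀u v ⟨hvX, hvd⟩

end aux7

theorem stmt_7 (S : Set ℤ) (d : ℕ) (hS : S.Finite) (h0 : 0 ∉ S) (hcard : S.ncard = d) :
    (∃ D : Set ℤ, EffDominating S D) ↔ dominationRatio S = 1 / ((d : ℝ) + 1) := by
  classical
  set T := hS.toFinset with hT
  have hTS : ∀ x, x ∈ T ↔ x ∈ S := fun x => hS.mem_toFinset
  have hTd : T.card = d := by rw [← hcard, Set.ncard_eq_toFinset_card S hS]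
  set M := T.sup Int.natAbs with hMdef
  have hM : ∀ s ∈ T, s.natAbs ≤ M := fun s hs => Finset.le_sup hs
  have hbdd : BddBelow (lowerDensity '' {D : Set ℤ | Dominating S D}) := by
    refine ⟨1 / ((d : ℝ) + 1), ?_⟩
    rintro b ⟨D', hD', rfl⟩
    rw [← hTd]
    exact aux7_ld_ge T hTS M hM hD'
  constructor
  · rintro ⟨D, hD⟩
    have h1 : lowerDensity D = 1 / ((d : ℝ) + 1) := by
      rw [← hTd]
      exact aux7_eff_density T hTS h0 M hM hD
    refine le_antisymm ?_ ?_
    · rw [← h1]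
      exact csInf_le hbdd ⟨D, aux7_eff_dom hD, rfl⟩
    · refine le_csInf ⟨lowerDensity Set.univ, Set.univ, fun m => Or.inl trivial, rfl⟩ ?_
      rintro b ⟨D', hD', rfl⟩
      rw [← hTd]
      exact aux7_ld_ge T hTS M hM hD'
  · intro hrat
    have hwin := aux7_window T hTS M hM d hTd hrat
    choose X hX using hwin
    exact aux7_glue T hTS X hX
end

section
/- Let S ⊆ ℤ \ {0} be finite, and let D be a periodic dominating set of Γ(ℤ, S) with period p such that γ̄(ℤ, S) = δ(D) = |D ∩ [1,p]|/p. Then the image of D ∩ [1,p] in ℤ_p is a minimum dominating set of the circulant digraph Γ(ℤ_p, S_p), where S_p is the set of residues mod p of elements of S; consequently γ(ℤ_p, S_p) = γ̄(ℤ, S)·p. -/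
open Filter

/-- `D'` is a dominating set of the circulant digraph `Γ(ℤ_p, S')`. -/
def DominatingC {p : ℕ} (S' D' : Set (ZMod p)) : Prop :=
  ∀ m : ZMod p, m ∈ D' ∨ ∃ u ∈ D', ∃ s ∈ S', m = u + s

/- ### Auxiliary lemmas -/

lemma ncard_Icc_int (a b : ℤ) : (Set.Icc a b).ncard = (b + 1 - a).toNat := by
  rw [← Finset.coe_Icc, Set.ncard_coe_finset, Int.card_Icc]

lemma lowerDensity_nonneg (D : Set ℤ) : 0 ≤ lowerDensity D := by
  have hub : ∀ n : ℕ,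
      ((D ∩ Set.Icc (-(n : ℤ)) (n : ℤ)).ncard : ℝ) / (2 * (n : ℝ) + 1) ≤ 1 := by
    intro n
    have hpos : (0 : ℝ) < 2 * (n : ℝ) + 1 := by positivity
    rw [div_le_one hpos]
    have h1 : (D ∩ Set.Icc (-(n : ℤ)) (n : ℤ)).ncard ≤ (Set.Icc (-(n : ℤ)) (n : ℤ)).ncard :=
      Set.ncard_le_ncard Set.inter_subset_right (Set.finite_Icc _ _)
    have h2 : (Set.Icc (-(n : ℤ)) (n : ℤ)).ncard = 2 * n + 1 := by
      rw [ncard_Icc_int]; omega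
    have h3 : (D ∩ Set.Icc (-(n : ℤ)) (n : ℤ)).ncard ≤ 2 * n + 1 := h2 ▸ h1
    calc ((D ∩ Set.Icc (-(n : ℤ)) (n : ℤ)).ncard : ℝ) ≤ ((2 * n + 1 : ℕ) : ℝ) := by
          exact_mod_cast h3
      _ ≤ 2 * (n : ℝ) + 1 := by push_cast; linarith
  refine le_liminf_of_le (isCoboundedUnder_ge_of_le _ hub)
    (Eventually.of_forall fun n => by positivity)

lemma castInjOn (p : ℕ) (hp : 0 < p) (a : ℤ) :
    Set.InjOn (fun x : ℤ => (x : ZMod p)) (Set.Icc a (a + p - 1)) := by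
  intro x hx y hy hxy
  simp only [Set.mem_Icc] at hx hy
  rw [ZMod.intCast_eq_intCast_iff_dvd_sub] at hxy
  have h0 : y - x = 0 := Int.eq_zero_of_abs_lt_dvd hxy (by rw [abs_lt]; omega)
  omega

lemma interval_count (p : ℕ) (hp : 0 < p) (D'' : Set (ZMod p)) (a : ℤ) :
    ({x : ℤ | (x : ZMod p) ∈ D''} ∩ Set.Icc a (a + p - 1)).ncard = D''.ncard := by
  haveI : NeZero p := ⟨hp.ne'⟩
  have hbij : Set.BijOn (fun x : ℤ => (x : ZMod p))
      ({x : ℤ | (x : ZMod p) ∈ D''} ∩ Set.Icc a (a + p - 1)) D'' := by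
    refine ⟨fun x hx => hx.1, (castInjOn p hp a).mono Set.inter_subset_right, ?_⟩
    intro d hd
    have hval : (((d - (a : ZMod p)).val : ℤ) : ZMod p) = d - (a : ZMod p) := by
      push_cast
      rw [ZMod.natCast_val, ZMod.cast_id]
    refine ⟨a + ((d - (a : ZMod p)).val : ℤ), ⟨?_, ?_⟩, ?_⟩
    · show ((a + ((d - (a : ZMod p)).val : ℤ) : ℤ) : ZMod p) ∈ D''
      push_cast
      push_cast at hval
      rw [hval]; simpa using hd
    · have h1 : (d - (a : ZMod p)).val < p := ZMod.val_lt _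
      simp only [Set.mem_Icc]
      omega
    · show ((a + ((d - (a : ZMod p)).val : ℤ) : ℤ) : ZMod p) = d
      push_cast
      push_cast at hval
      rw [hval]; ring
  have h := Set.ncard_image_of_injOn hbij.injOn
  rw [hbij.image_eq] at h
  exact h.symm

lemma split_ncard (E : Set ℤ) (a b c : ℤ) (h1 : a ≤ b) (h2 : b ≤ c + 1) :
    (E ∩ Set.Icc a c).ncard =
      (E ∩ Set.Icc a (b - 1)).ncard + (E ∩ Set.Icc b c).ncard := by
  have hsplit : E ∩ Set.Icc a c = (E ∩ Set.Icc a (b - 1)) ∪ (E ∩ Set.Icc b c) := by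
    ext x
    simp only [Set.mem_inter_iff, Set.mem_Icc, Set.mem_union]
    constructor
    · rintro ⟨hx, h3, h4⟩
      by_cases hb : x ≤ b - 1
      · exact Or.inl ⟨hx, h3, hb⟩
      · exact Or.inr ⟨hx, by omega, h4⟩
    · rintro (⟨hx, h3, h4⟩ | ⟨hx, h3, h4⟩) <;> exact ⟨hx, by omega, by omega⟩
  have hd : Disjoint (E ∩ Set.Icc a (b - 1)) (E ∩ Set.Icc b c) := by
    rw [Set.disjoint_left]
    rintro x ⟨-, hx1⟩ ⟨-, hx2⟩
    simp only [Set.mem_Icc] at hx1 hx2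
    omega
  rw [hsplit, Set.ncard_union_eq hd (Set.Finite.inter_of_right (Set.finite_Icc _ _) E)
    (Set.Finite.inter_of_right (Set.finite_Icc _ _) E)]

lemma blocks (p : ℕ) (hp : 0 < p) (D'' : Set (ZMod p)) (a : ℤ) (m : ℕ) :
    ({x : ℤ | (x : ZMod p) ∈ D''} ∩ Set.Icc a (a + (m : ℤ) * (p : ℤ) - 1)).ncard
      = m * D''.ncard := by
  induction m generalizing a with
  | zero =>
    have : Set.Icc a (a + (0 : ℤ) * (p : ℤ) - 1) = ∅ := Set.Icc_eq_empty (by omega)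
    simp [this]
  | succ k ih =>
    have hp' : (1 : ℤ) ≤ (p : ℤ) := by exact_mod_cast hp
    have hkp : (0 : ℤ) ≤ (k : ℤ) * (p : ℤ) := by positivity
    have e1 : a + ((k + 1 : ℕ) : ℤ) * (p : ℤ) - 1 = (a + (k : ℤ) * (p : ℤ)) + (p : ℤ) - 1 := by
      push_cast; ring
    rw [e1, split_ncard _ a (a + (k : ℤ) * (p : ℤ)) _ (by linarith) (by linarith)]
    rw [ih a, interval_count p hp]
    ring

lemma density_le (p : ℕ) (hp : 0 < p) (D'' : Set (ZMod p)) :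
    lowerDensity {x : ℤ | (x : ZMod p) ∈ D''} ≤ (D''.ncard : ℝ) / (p : ℝ) := by
  set E := {x : ℤ | (x : ZMod p) ∈ D''} with hE
  set k := D''.ncard with hk
  have key : ∀ n : ℕ, ((E ∩ Set.Icc (-(n : ℤ)) (n : ℤ)).ncard : ℝ) / (2 * (n : ℝ) + 1)
      ≤ (k : ℝ) / (p : ℝ) + (k : ℝ) / (2 * (n : ℝ) + 1) := by
    intro n
    set m : ℕ := 2 * n / p + 1 with hm
    have hd1 : 2 * n / p * p + 2 * n % p = 2 * n := Nat.div_add_mod' _ _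
    have hd2 : 2 * n % p < p := Nat.mod_lt _ hp
    have hmp : 2 * n + 1 ≤ m * p := by
      have : m * p = 2 * n / p * p + p := by rw [hm, add_mul, one_mul]
      rw [this]; omega
    have hmp2 : m * p ≤ 2 * n + p := by
      have h1 : 2 * n / p * p ≤ 2 * n := Nat.div_mul_le_self _ _
      have : m * p = 2 * n / p * p + p := by rw [hm, add_mul, one_mul]
      omega
    clear_value m
    have hsub : E ∩ Set.Icc (-(n : ℤ)) (n : ℤ)
        ⊆ E ∩ Set.Icc (-(n : ℤ)) (-(n : ℤ) + (m : ℤ) * (p : ℤ) - 1) := by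
      refine Set.inter_subset_inter_right _ (Set.Icc_subset_Icc_right ?_)
      have : (2 * n + 1 : ℤ) ≤ (m : ℤ) * (p : ℤ) := by exact_mod_cast hmp
      linarith
    have hcard : (E ∩ Set.Icc (-(n : ℤ)) (n : ℤ)).ncard ≤ m * k := by
      rw [← blocks p hp D'' (-(n : ℤ)) m]
      exact Set.ncard_le_ncard hsub (Set.Finite.inter_of_right (Set.finite_Icc _ _) E)
    have hn0 : (0 : ℝ) < 2 * (n : ℝ) + 1 := by positivity
    have hp0 : (0 : ℝ) < (p : ℝ) := by exact_mod_cast hp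
    have hk0 : (0 : ℝ) ≤ (k : ℝ) := Nat.cast_nonneg _
    have step1 : ((E ∩ Set.Icc (-(n : ℤ)) (n : ℤ)).ncard : ℝ) / (2 * (n : ℝ) + 1)
        ≤ ((m * k : ℕ) : ℝ) / (2 * (n : ℝ) + 1) := by
      have hcast : ((E ∩ Set.Icc (-(n : ℤ)) (n : ℤ)).ncard : ℝ) ≤ ((m * k : ℕ) : ℝ) := by
        exact_mod_cast hcard
      gcongr
    refine step1.trans ?_
    have hmp2' : (m : ℝ) * (p : ℝ) ≤ 2 * (n : ℝ) + (p : ℝ) := by exact_mod_cast hmp2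
    rw [div_add_div _ _ (ne_of_gt hp0) (ne_of_gt hn0), div_le_div_iff₀ hn0 (by positivity)]
    push_cast
    nlinarith [mul_le_mul_of_nonneg_right hmp2' (mul_nonneg hk0 hn0.le)]
  have htend0 : Tendsto (fun n : ℕ => 2 * (n : ℝ) + 1) atTop atTop := by
    apply tendsto_atTop_add_const_right
    exact Tendsto.const_mul_atTop two_pos tendsto_natCast_atTop_atTop
  have htend : Tendsto (fun n : ℕ => (k : ℝ) / (p : ℝ) + (k : ℝ) / (2 * (n : ℝ) + 1)) atTop
      (nhds ((k : ℝ) / (p : ℝ) + 0)) :=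
    tendsto_const_nhds.add (Tendsto.div_atTop tendsto_const_nhds htend0)
  have hbound : IsBoundedUnder (· ≥ ·) atTop
      (fun n : ℕ => ((E ∩ Set.Icc (-(n : ℤ)) (n : ℤ)).ncard : ℝ) / (2 * (n : ℝ) + 1)) :=
    isBoundedUnder_of ⟨0, fun n => by positivity⟩
  have hcb : IsCoboundedUnder (· ≥ ·) atTop
      (fun n : ℕ => (k : ℝ) / (p : ℝ) + (k : ℝ) / (2 * (n : ℝ) + 1)) :=
    htend.isBoundedUnder_le.isCoboundedUnder_ge
  calc lowerDensity E
      ≤ liminf (fun n : ℕ => (k : ℝ) / (p : ℝ) + (k : ℝ) / (2 * (n : ℝ) + 1)) atTop :=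
        liminf_le_liminf (Eventually.of_forall key) hbound hcb
    _ = (k : ℝ) / (p : ℝ) + 0 := htend.liminf_eq
    _ = (k : ℝ) / (p : ℝ) := by ring

lemma rep_lemma (D : Set ℤ) (p : ℕ) (hp : 0 < p)
    (hper : ∀ x : ℤ, x ∈ D ↔ x + p ∈ D) {x : ℤ} (hx : x ∈ D) :
    ∃ y ∈ D ∩ Set.Icc 1 (p : ℤ), (y : ZMod p) = (x : ZMod p) := by
  have hper' : ∀ (k : ℤ) (z : ℤ), z ∈ D → z + k * p ∈ D := by
    intro k
    induction k using Int.induction_on with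
    | zero => simpa using fun z hz => hz
    | succ k ih =>
      intro z hz
      rw [show z + ((k : ℤ) + 1) * p = (z + k * p) + p by ring]
      exact (hper _).mp (ih z hz)
    | pred k ih =>
      intro z hz
      apply (hper (z + (-(k : ℤ) - 1) * p)).mpr
      rw [show z + (-(k : ℤ) - 1) * p + p = z + (-(k : ℤ)) * p by ring]
      exact ih z hz
  have hp0 : (0 : ℤ) < (p : ℤ) := by exact_mod_cast hp
  set y : ℤ := (x - 1) % p + 1 with hy
  have hmod1 : 0 ≤ (x - 1) % p := Int.emod_nonneg _ (ne_of_gt hp0)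
  have hmod2 : (x - 1) % p < p := Int.emod_lt_of_pos _ hp0
  have hyD : y ∈ D := by
    have : y = x + (-((x - 1) / p)) * p := by
      rw [hy, Int.emod_def]; ring
    rw [this]
    exact hper' _ x hx
  refine ⟨y, ⟨hyD, by simp only [Set.mem_Icc]; omega⟩, ?_⟩
  rw [ZMod.intCast_eq_intCast_iff]
  have h1 : (x - 1) % p ≡ x - 1 [ZMOD p] := Int.emod_emod_of_dvd (x - 1) dvd_rfl
  simpa [hy] using h1.add_right 1

theorem stmt_8 (S : Set ℤ) (hS : S.Finite) (h0 : 0 ∉ S)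
    (D : Set ℤ) (p : ℕ) (hp : 0 < p)
    (hDdom : Dominating S D)
    (hper : ∀ x : ℤ, x ∈ D ↔ x + p ∈ D)
    (hmin : dominationRatio S = lowerDensity D)
    (hval : lowerDensity D = ((D ∩ Set.Icc 1 (p : ℤ)).ncard : ℝ) / (p : ℝ)) :
    DominatingC ((fun s : ℤ => (s : ZMod p)) '' S)
        ((fun x : ℤ => (x : ZMod p)) '' (D ∩ Set.Icc 1 (p : ℤ))) ∧
      (∀ D'' : Set (ZMod p), DominatingC ((fun s : ℤ => (s : ZMod p)) '' S) D'' →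
        ((fun x : ℤ => (x : ZMod p)) '' (D ∩ Set.Icc 1 (p : ℤ))).ncard ≤ D''.ncard) ∧
      ((((fun x : ℤ => (x : ZMod p)) '' (D ∩ Set.Icc 1 (p : ℤ))).ncard : ℝ) =
        dominationRatio S * p) := by
  haveI : NeZero p := ⟨hp.ne'⟩
  have hmv : ∀ m : ZMod p, (((m.val : ℤ)) : ZMod p) = m := by
    intro m
    push_cast
    rw [ZMod.natCast_val, ZMod.cast_id]
  have hinjOn : Set.InjOn (fun x : ℤ => (x : ZMod p)) (D ∩ Set.Icc 1 (p : ℤ)) := by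
    have h := castInjOn p hp 1
    rw [show (1 : ℤ) + p - 1 = (p : ℤ) by ring] at h
    exact h.mono Set.inter_subset_right
  have himg : ((fun x : ℤ => (x : ZMod p)) '' (D ∩ Set.Icc 1 (p : ℤ))).ncard
      = (D ∩ Set.Icc 1 (p : ℤ)).ncard := Set.ncard_image_of_injOn hinjOn
  refine ⟨?_, ?_, ?_⟩
  · -- domination
    intro m
    rcases hDdom ((m.val : ℤ)) with hM | ⟨u, hu, s, hs, heq⟩
    · obtain ⟨y, hy, hyc⟩ := rep_lemma D p hp hper hM
      left
      refine ⟨y, hy, ?_⟩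
      show (y : ZMod p) = m
      rw [hyc]; exact hmv m
    · obtain ⟨y, hy, hyc⟩ := rep_lemma D p hp hper hu
      right
      refine ⟨(y : ZMod p), ⟨y, hy, rfl⟩, (s : ZMod p), ⟨s, hs, rfl⟩, ?_⟩
      have h2 : (((m.val : ℤ)) : ZMod p) = ((u + s : ℤ) : ZMod p) := by rw [heq]
      rw [hmv] at h2
      push_cast at h2
      show m = (y : ZMod p) + (s : ZMod p)
      rw [h2, hyc]
  · -- minimality
    intro D'' hdom
    set E := {x : ℤ | (x : ZMod p) ∈ D''} with hEdef
    have hE : Dominating S E := by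
      intro m
      rcases hdom ((m : ℤ) : ZMod p) with h | ⟨u, hu, s', hs', heq⟩
      · left; exact h
      · obtain ⟨s, hsS, rfl⟩ := hs'
        right
        refine ⟨m - s, ?_, s, hsS, by ring⟩
        show ((m - s : ℤ) : ZMod p) ∈ D''
        push_cast
        have : ((m : ℤ) : ZMod p) - ((s : ℤ) : ZMod p) = u := by rw [heq]; ring
        rw [this]
        exact hu
    have h1 : dominationRatio S ≤ lowerDensity E := by
      apply csInf_le
      · refine ⟨0, ?_⟩
        rintro r ⟨D', -, rfl⟩
        exact lowerDensity_nonneg D'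
      · exact ⟨E, hE, rfl⟩
    have h2 := density_le p hp D''
    have h3 : ((D ∩ Set.Icc 1 (p : ℤ)).ncard : ℝ) / (p : ℝ) ≤ (D''.ncard : ℝ) / (p : ℝ) := by
      rw [← hval, ← hmin]
      exact h1.trans h2
    have hp0 : (0 : ℝ) < (p : ℝ) := by exact_mod_cast hp
    have h4 : ((D ∩ Set.Icc 1 (p : ℤ)).ncard : ℝ) ≤ (D''.ncard : ℝ) := by
      rwa [div_le_div_iff_of_pos_right hp0] at h3
    rw [himg]
    exact_mod_cast h4
  · -- value
    rw [himg, hmin, hval]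
    have hp0 : (p : ℝ) ≠ 0 := by positivity
    field_simp
end
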